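/- Let V be an N×N real positive definite matrix, and for w ∈ [0,1]^N define F̂(w) = log ( Σ_{x ⊆ {1,…,N}} (∏_{i∈x} w_i)·(∏_{i∉x} (1−w_i))·exp(f(x)) ), where f(x) = log det(V_x) (with f(∅) = 0). Then F̂(w) = log det(diag(w)·(V − I) + I) for all w ∈ [0,1)^N. -/

import Mathlib

open Matrix BigOperators

/-- The determinant of the principal submatrix of `V` indexed by the subset `x`
(with the convention `det(V_∅) = 1`, which holds automatically for the empty matrix). -/
noncomputable def principalSubdet {N : ℕ} (V : Matrix (Fin N) (Fin N) ℝ)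
    (x : Finset (Fin N)) : ℝ :=
  (V.submatrix (fun i : x => (i : Fin N)) (fun i : x => (i : Fin N))).det

lemma principalSubdet_pos {N : ℕ} {V : Matrix (Fin N) (Fin N) ℝ} (hV : V.PosDef)
    (x : Finset (Fin N)) : 0 < principalSubdet V x := by
  apply Matrix.PosDef.det_pos
  refine Matrix.PosDef.of_dotProduct_mulVec_pos ?_ ?_
  · exact hV.isHermitian.submatrix _
  · intro y hy
    set z : Fin N → ℝ := fun j => if h : j ∈ x then y ⟨j, h⟩ else 0 with hz
    have hzne : z ≠ 0 := by
      intro h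
      apply hy
      funext i
      have := congrFun h (i : Fin N)
      simpa [hz, i.2] using this
    have h2 := hV.dotProduct_mulVec_pos hzne
    have outer : ∀ (F : Fin N → ℝ), (∀ j ∉ x, F j = 0) →
        ∑ j : Fin N, F j = ∑ j : {j // j ∈ x}, F j := by
      intro F hF
      rw [Finset.sum_coe_sort x F]
      exact (Finset.sum_subset x.subset_univ (fun j _ hj => hF j hj)).symm
    have key : star z ⬝ᵥ V *ᵥ z =
        star y ⬝ᵥ (V.submatrix (fun i : x => (i : Fin N)) (fun i : x => (i : Fin N))) *ᵥ y := by
      simp only [dotProduct, mulVec, star, id, Matrix.submatrix_apply, RCLike.star_def]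
      rw [outer _ (by intro j hj; simp [hz, hj])]
      refine Finset.sum_congr rfl fun j _ => ?_
      have hzj : z (↑j : Fin N) = y j := by simp [hz, j.2]
      rw [hzj]
      congr 1
      rw [outer _ (by intro k hk; simp [hz, hk])]
      exact Finset.sum_congr rfl fun k _ => by simp [hz, k.2]
    rw [key] at h2
    simpa using h2

lemma det_piecewise {N : ℕ} (V : Matrix (Fin N) (Fin N) ℝ) (s : Finset (Fin N)) :
    (Matrix.of (s.piecewise (V : Fin N → Fin N → ℝ) (1 : Matrix (Fin N) (Fin N) ℝ))).det
      = principalSubdet V s := by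
  classical
  set B : Matrix (Fin N) (Fin N) ℝ :=
    Matrix.of (s.piecewise (V : Fin N → Fin N → ℝ) (1 : Matrix (Fin N) (Fin N) ℝ)) with hB
  rw [show B.det = (B.submatrix (Equiv.sumCompl (· ∈ s)) (Equiv.sumCompl (· ∈ s))).det from
    (Matrix.det_submatrix_equiv_self _ B).symm]
  have h2 : B.submatrix (Equiv.sumCompl (· ∈ s)) (Equiv.sumCompl (· ∈ s)) = Matrix.fromBlocks
      (V.submatrix (fun i : s => (i : Fin N)) (fun i : s => (i : Fin N)))
      (V.submatrix (fun i : s => (i : Fin N)) (fun i : {i // ¬ i ∈ s} => (i : Fin N)))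
      0 1 := by
    ext i j
    cases i with
    | inl i => cases j with
      | inl j => simp [hB, Finset.piecewise, i.2]
      | inr j => simp [hB, Finset.piecewise, i.2]
    | inr i => cases j with
      | inl j =>
        have h : (i : Fin N) ≠ (j : Fin N) := fun h => i.2 (h ▸ j.2)
        simp [hB, Finset.piecewise, i.2, Matrix.one_apply, h]
      | inr j =>
        simp [hB, Finset.piecewise, i.2, Matrix.one_apply, Subtype.ext_iff]
  rw [h2, Matrix.det_fromBlocks_zero₂₁]
  simp [principalSubdet]

/-- For positive definite `V` and `w ∈ [0,1)^N`, the soft-max continuous extension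
`F̂(w) = log ∑_x (∏_{i∈x} w_i)(∏_{i∉x} (1-w_i)) exp(f(x))` with `f(x) = log det(V_x)`
equals `log det(diag(w)(V - I) + I)`. -/
theorem softmax_extension_eq_logdet (N : ℕ) (V : Matrix (Fin N) (Fin N) ℝ)
    (hV : V.PosDef) (w : Fin N → ℝ) (hw : ∀ i, 0 ≤ w i ∧ w i < 1) :
    Real.log (∑ x : Finset (Fin N),
        (∏ i ∈ x, w i) * (∏ i ∈ xᶜ, (1 - w i)) *
          Real.exp (Real.log (principalSubdet V x)))
      = Real.log (Matrix.diagonal w * (V - 1) + 1).det := by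
  classical
  congr 1
  set a : Fin N → Fin N → ℝ := fun i => w i • V i with ha
  set b : Fin N → Fin N → ℝ := fun i => (1 - w i) • (1 : Matrix (Fin N) (Fin N) ℝ) i with hb
  have hM : (Matrix.diagonal w * (V - 1) + 1 : Matrix (Fin N) (Fin N) ℝ) = Matrix.of (a + b) := by
    ext i j
    simp only [Matrix.add_apply, Matrix.diagonal_mul, Matrix.sub_apply, Matrix.of_apply,
      Pi.add_apply, ha, hb, Pi.smul_apply, smul_eq_mul]
    ring
  have hdet : (Matrix.of (a + b)).det
      = ∑ s : Finset (Fin N), (Matrix.detRowAlternating (R := ℝ) (n := Fin N)).toMultilinearMap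
          (s.piecewise a b) :=
    (Matrix.detRowAlternating (R := ℝ) (n := Fin N)).toMultilinearMap.map_add_univ a b
  rw [hM, hdet]
  refine Finset.sum_congr rfl fun s _ => ?_
  have hterm : Matrix.of (s.piecewise a b)
      = Matrix.diagonal (s.piecewise w (fun i => 1 - w i)) *
        Matrix.of (s.piecewise (V : Fin N → Fin N → ℝ) (1 : Matrix (Fin N) (Fin N) ℝ)) := by
    ext i j
    by_cases h : i ∈ s <;>
      simp [Finset.piecewise, h, ha, hb, Matrix.diagonal_mul]
  have : (Matrix.detRowAlternating (R := ℝ) (n := Fin N)).toMultilinearMap (s.piecewise a b)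
      = (Matrix.of (s.piecewise a b)).det := rfl
  rw [this, hterm, Matrix.det_mul, Matrix.det_diagonal, det_piecewise]
  rw [Real.exp_log (principalSubdet_pos hV s)]
  congr 1
  rw [Finset.prod_piecewise]
  simp [Finset.compl_eq_univ_sdiff]
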